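/- For all real parameters μ, ν, γ with 0 < μ ≤ 1, γ > 0, ν ≥ μγ, every real x ≥ 0, and every real s, the moment generating function of the fractional generalized probability distribution satisfies ∑_{n=0}^∞ e^{−sn} · Γ(ν) · (x^n / n!) · (d^n/dz^n E_{μ,ν}^γ)(−x) = Γ(ν) · E_{μ,ν}^γ(x(e^{−s} − 1)). -/

import Mathlib

/-- The three-parameter Mittag-Leffler (Prabhakar) function
`E_{μ,ν}^γ(z) = ∑_{m=0}^∞ ((γ)_m / (m! Γ(μ m + ν))) z^m`,
where `(γ)_m = Γ(γ+m)/Γ(γ)`. -/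
noncomputable def prabhakar (μ ν γ : ℝ) (z : ℂ) : ℂ :=
  ∑' m : ℕ,
    (((Real.Gamma (γ + m) / Real.Gamma γ) / (m.factorial * Real.Gamma (μ * m + ν)) : ℝ) : ℂ)
      * z ^ m

namespace PrabhakarMGF

noncomputable def pcoef (μ ν γ : ℝ) (n m : ℕ) : ℝ :=
  (Real.Gamma (γ + (n + m : ℕ)) / Real.Gamma γ) /
    ((m.factorial : ℝ) * Real.Gamma (μ * (n + m : ℕ) + ν))

noncomputable def gfun (μ ν γ : ℝ) (n : ℕ) (z : ℂ) : ℂ :=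
  ∑' m : ℕ, ((pcoef μ ν γ n m : ℝ) : ℂ) * z ^ m

lemma sum_antidiag_pow {𝕜 : Type*} [Field 𝕜] [CharZero 𝕜] (a b : 𝕜) (k : ℕ) :
    ∑ p ∈ Finset.HasAntidiagonal.antidiagonal k,
      a ^ p.1 / p.1.factorial * (b ^ p.2 / p.2.factorial)
    = (a + b) ^ k / k.factorial := by
  rw [Finset.Nat.sum_antidiagonal_eq_sum_range_succ_mk, add_pow, Finset.sum_div]
  apply Finset.sum_congr rfl
  intro n hn
  have hnk : n ≤ k := Nat.lt_succ_iff.mp (Finset.mem_range.mp hn)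
  have hfact : ((k.choose n : ℕ) : 𝕜) * n.factorial * (k - n).factorial = k.factorial := by
    exact_mod_cast congrArg (Nat.cast : ℕ → 𝕜)
      (Nat.choose_mul_factorial_mul_factorial hnk)
  have h1 : (n.factorial : 𝕜) ≠ 0 := Nat.cast_ne_zero.mpr n.factorial_ne_zero
  have h2 : ((k - n).factorial : 𝕜) ≠ 0 := Nat.cast_ne_zero.mpr (k - n).factorial_ne_zero
  have h3 : (k.factorial : 𝕜) ≠ 0 := Nat.cast_ne_zero.mpr k.factorial_ne_zero
  rw [div_mul_div_comm, div_eq_div_iff (mul_ne_zero h1 h2) h3]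
  linear_combination (-(a ^ n * b ^ (k - n))) * hfact

lemma row_sum {𝕜 : Type*} [Field 𝕜] [CharZero 𝕜] (k : ℕ) (f : ℕ × ℕ → 𝕜) (C a b : 𝕜)
    (hf : ∀ p ∈ Finset.HasAntidiagonal.antidiagonal k,
      f p = C * (a ^ p.1 / p.1.factorial * (b ^ p.2 / p.2.factorial))) :
    ∑ p ∈ Finset.HasAntidiagonal.antidiagonal k, f p = C * ((a + b) ^ k / k.factorial) := by
  rw [Finset.sum_congr rfl hf, ← Finset.mul_sum, sum_antidiag_pow]

section
variable {μ ν γ : ℝ} (hμ0 : 0 < μ) (hμ1 : μ ≤ 1) (hγ : 0 < γ) (hν : μ * γ ≤ ν)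

include hμ0 hγ hν in
lemma pcoef_pos (n m : ℕ) : 0 < pcoef μ ν γ n m := by
  have hν0 : 0 < ν := lt_of_lt_of_le (mul_pos hμ0 hγ) hν
  have h1 : 0 < Real.Gamma (γ + (n + m : ℕ)) :=
    Real.Gamma_pos_of_pos (by positivity)
  have h2 : 0 < Real.Gamma (μ * (n + m : ℕ) + ν) :=
    Real.Gamma_pos_of_pos (by positivity)
  have h3 : 0 < Real.Gamma γ := Real.Gamma_pos_of_pos hγ
  have h4 : (0:ℝ) < m.factorial := by exact_mod_cast m.factorial_pos
  exact div_pos (div_pos h1 h3) (mul_pos h4 h2)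

include hμ0 hγ hν in
lemma pcoef_succ (n m : ℕ) :
    pcoef μ ν γ n (m + 1) * (m + 1 : ℝ) = pcoef μ ν γ (n + 1) m := by
  have hν0 : 0 < ν := lt_of_lt_of_le (mul_pos hμ0 hγ) hν
  have hG : Real.Gamma (μ * ((n+1) + m : ℕ) + ν) ≠ 0 :=
    (Real.Gamma_pos_of_pos (by positivity)).ne'
  have he : n + (m + 1) = (n + 1) + m := by omega
  have hfac : ((m+1).factorial : ℝ) = (m + 1 : ℝ) * m.factorial := by
    push_cast [Nat.factorial_succ]; ring
  have hm : (m.factorial : ℝ) ≠ 0 := by exact_mod_cast m.factorial_ne_zero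
  rw [pcoef, pcoef, he, hfac]
  field_simp

lemma gamma_ratio_lb {t : ℝ} (hμ0 : 0 < μ) (ht : 2 ≤ t) :
    Real.Gamma t * (t - 1) ^ μ ≤ Real.Gamma (t + μ) := by
  have h0 : (0:ℝ) < t - 1 := by linarith
  have ht0 : (0:ℝ) < t := by linarith
  have key := Real.convexOn_log_Gamma.slope_mono_adjacent
    (Set.mem_Ioi.mpr h0) (Set.mem_Ioi.mpr (by linarith : (0:ℝ) < t + μ))
    (by linarith : t - 1 < t) (by linarith : t < t + μ)
  simp only [Function.comp] at key
  have hΓ : Real.Gamma t = (t - 1) * Real.Gamma (t - 1) := by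
    have := Real.Gamma_add_one (ne_of_gt h0)
    rw [sub_add_cancel] at this
    exact this
  have hΓ1 : 0 < Real.Gamma (t - 1) := Real.Gamma_pos_of_pos h0
  have hΓt : 0 < Real.Gamma t := Real.Gamma_pos_of_pos ht0
  have hΓtμ : 0 < Real.Gamma (t + μ) := Real.Gamma_pos_of_pos (by linarith)
  have hlog : Real.log (Real.Gamma t) - Real.log (Real.Gamma (t-1)) = Real.log (t-1) := by
    rw [hΓ, Real.log_mul (ne_of_gt h0) (ne_of_gt hΓ1)]; ring
  rw [show t - (t - 1) = 1 by ring, show t + μ - t = μ by ring, div_one, hlog] at key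
  have key2 : μ * Real.log (t - 1) ≤
      Real.log (Real.Gamma (t + μ)) - Real.log (Real.Gamma t) := by
    rw [le_div_iff₀ hμ0] at key; linarith
  have hle : Real.log (Real.Gamma t * (t - 1) ^ μ) ≤ Real.log (Real.Gamma (t + μ)) := by
    rw [Real.log_mul (ne_of_gt hΓt) (by positivity), Real.log_rpow h0]
    linarith
  calc Real.Gamma t * (t - 1) ^ μ
      = Real.exp (Real.log (Real.Gamma t * (t - 1) ^ μ)) := by
        rw [Real.exp_log (by positivity)]
    _ ≤ Real.exp (Real.log (Real.Gamma (t + μ))) := Real.exp_le_exp.mpr hle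
    _ = Real.Gamma (t + μ) := Real.exp_log hΓtμ

include hμ0 hμ1 hγ hν in
lemma summable_pcoef (n : ℕ) {r : ℝ} (hr : 0 ≤ r) :
    Summable fun m => pcoef μ ν γ n m * r ^ m := by
  have hν0 : 0 < ν := lt_of_lt_of_le (mul_pos hμ0 hγ) hν
  set K : ℝ := γ + n + 1 with hK
  have hK0 : 0 < K := by positivity
  set C : ℝ := 2 * r * K with hC
  have hC0 : 0 ≤ C := by positivity
  set T : ℝ := max 2 (C ^ (1/μ) + 1) with hT
  apply summable_of_ratio_norm_eventually_le (r := 1/2) (by norm_num)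
  rw [Filter.eventually_atTop]
  refine ⟨⌈(T - ν)/μ⌉₊, fun m hm => ?_⟩
  have hpm := pcoef_pos hμ0 hγ hν n m
  have hpm1 := pcoef_pos hμ0 hγ hν n (m+1)
  set t : ℝ := μ * (n + m : ℕ) + ν with hts
  have hTt : T ≤ t := by
    have h1 : (T - ν)/μ ≤ (m : ℝ) := (Nat.ceil_le.mp hm)
    have h2 : T - ν ≤ μ * m := by
      rw [div_le_iff₀ hμ0] at h1; linarith [h1]
    have h3 : (0:ℝ) ≤ μ * n := by positivity
    have h4 : (((n + m : ℕ)) : ℝ) = (n:ℝ) + m := by push_cast; ring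
    rw [hts, h4]; nlinarith
  have ht2 : 2 ≤ t := le_trans (le_max_left _ _) hTt
  have htpow : C ≤ (t - 1) ^ μ := by
    have h1 : C ^ (1/μ) + 1 ≤ T := le_max_right _ _
    have h2 : C ^ (1/μ) ≤ t - 1 := by linarith
    calc C = (C ^ (1/μ)) ^ μ := by
            rw [← Real.rpow_mul hC0, one_div, inv_mul_cancel₀ hμ0.ne', Real.rpow_one]
      _ ≤ (t - 1) ^ μ := Real.rpow_le_rpow (Real.rpow_nonneg hC0 _) h2 hμ0.le
  have hΓt : 0 < Real.Gamma t := Real.Gamma_pos_of_pos (by linarith)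
  have hΓtμ : 0 < Real.Gamma (t + μ) := Real.Gamma_pos_of_pos (by linarith)
  have hgnm : (0:ℝ) < γ + (n + m : ℕ) := by positivity
  have hΓg : 0 < Real.Gamma (γ + (n + m : ℕ)) := Real.Gamma_pos_of_pos hgnm
  have hΓγ : 0 < Real.Gamma γ := Real.Gamma_pos_of_pos hγ
  have hfm : (0:ℝ) < m.factorial := by exact_mod_cast m.factorial_pos
  have hsucc : pcoef μ ν γ n (m+1)
      = (Real.Gamma (γ + (n + m : ℕ)) / Real.Gamma γ / (m.factorial : ℝ))
        * (γ + (n + m : ℕ)) / ((m + 1 : ℝ) * Real.Gamma (t + μ)) := by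
    rw [pcoef]
    have h1 : (γ + ((n + (m+1) : ℕ) : ℝ)) = (γ + (n + m : ℕ)) + 1 := by push_cast; ring
    have h2 : Real.Gamma (γ + ((n + (m+1) : ℕ) : ℝ))
        = (γ + (n + m : ℕ)) * Real.Gamma (γ + (n + m : ℕ)) := by
      rw [h1, Real.Gamma_add_one (ne_of_gt hgnm)]
    have h3 : μ * ((n + (m+1) : ℕ) : ℝ) + ν = t + μ := by rw [hts]; push_cast; ring
    rw [h2, h3]
    have hfac : (((m+1).factorial : ℕ) : ℝ) = (m + 1 : ℝ) * m.factorial := by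
      push_cast [Nat.factorial_succ]; ring
    rw [hfac]
    field_simp
  have hbase : pcoef μ ν γ n m
      = (Real.Gamma (γ + (n + m : ℕ)) / Real.Gamma γ / (m.factorial : ℝ)) / Real.Gamma t := by
    rw [pcoef, hts]; ring
  set P : ℝ := Real.Gamma (γ + (n + m : ℕ)) / Real.Gamma γ / (m.factorial : ℝ) with hP
  have hP0 : 0 < P := by positivity
  have hKb : γ + ((n + m : ℕ) : ℝ) ≤ K * (m + 1) := by
    rw [hK]; push_cast
    nlinarith [hγ, (Nat.cast_nonneg m : (0:ℝ) ≤ m), (Nat.cast_nonneg n : (0:ℝ) ≤ n)]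
  have s1 : Real.Gamma t * C ≤ Real.Gamma (t + μ) := by
    have := mul_le_mul_of_nonneg_left htpow hΓt.le
    have h2 := gamma_ratio_lb hμ0 ht2
    linarith
  have key : pcoef μ ν γ n (m+1) * r ≤ 1/2 * pcoef μ ν γ n m := by
    rw [hsucc, hbase, div_mul_eq_mul_div, ← mul_div_assoc,
      div_le_div_iff₀ (by positivity) hΓt]
    rw [hC] at s1
    calc P * (γ + ((n + m : ℕ):ℝ)) * r * Real.Gamma t
        = P * (γ + ((n + m : ℕ):ℝ)) * (r * Real.Gamma t) := by ring
      _ ≤ P * (K * ((m:ℝ) + 1)) * (r * Real.Gamma t) :=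
          mul_le_mul_of_nonneg_right (mul_le_mul_of_nonneg_left hKb hP0.le)
            (mul_nonneg hr hΓt.le)
      _ = (1/2 * P * ((m:ℝ) + 1)) * (Real.Gamma t * (2 * r * K)) := by ring
      _ ≤ (1/2 * P * ((m:ℝ) + 1)) * Real.Gamma (t + μ) :=
          mul_le_mul_of_nonneg_left s1 (by positivity)
      _ = 1/2 * P * (((m:ℝ) + 1) * Real.Gamma (t + μ)) := by ring
  calc ‖pcoef μ ν γ n (m+1) * r ^ (m+1)‖
      = (pcoef μ ν γ n (m+1) * r) * r ^ m := by
        rw [Real.norm_eq_abs, abs_of_nonneg (by positivity), pow_succ]; ring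
    _ ≤ (1/2 * pcoef μ ν γ n m) * r ^ m :=
        mul_le_mul_of_nonneg_right key (by positivity)
    _ = 1/2 * ‖pcoef μ ν γ n m * r ^ m‖ := by
        rw [Real.norm_eq_abs, abs_of_nonneg (by positivity)]; ring

include hμ0 hμ1 hγ hν in
lemma summable_gfun (n : ℕ) (z : ℂ) :
    Summable fun m => ((pcoef μ ν γ n m : ℝ) : ℂ) * z ^ m := by
  apply Summable.of_norm
  have h : ∀ m, ‖((pcoef μ ν γ n m : ℝ) : ℂ) * z ^ m‖ = pcoef μ ν γ n m * ‖z‖ ^ m := by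
    intro m
    rw [norm_mul, norm_pow, Complex.norm_real, Real.norm_eq_abs,
      abs_of_nonneg (pcoef_pos hμ0 hγ hν n m).le]
  simpa only [h] using summable_pcoef hμ0 hμ1 hγ hν n (norm_nonneg z)

include hμ0 hμ1 hγ hν in
lemma hasDerivAt_gfun (n : ℕ) (z : ℂ) :
    HasDerivAt (gfun μ ν γ n) (gfun μ ν γ (n + 1) z) z := by
  set R : ℝ := ‖z‖ + 1 with hR
  have hR1 : (1:ℝ) ≤ R := by rw [hR]; linarith [norm_nonneg z]
  have hzball : z ∈ Metric.ball (0:ℂ) R := by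
    simp only [Metric.mem_ball, dist_zero_right]; simp [hR]
  set u : ℕ → ℝ := fun m => pcoef μ ν γ n m * ((m : ℝ) * R ^ (m - 1)) with hu
  have hu_sum : Summable u := by
    rw [← summable_nat_add_iff 1]
    have h : ∀ m : ℕ, u (m + 1) = pcoef μ ν γ (n + 1) m * R ^ m := by
      intro m
      simp only [hu]
      rw [show m + 1 - 1 = m from rfl, ← pcoef_succ hμ0 hγ hν n m]
      push_cast; ring
    simpa only [h] using summable_pcoef hμ0 hμ1 hγ hν (n+1) (by linarith)
  have key := hasDerivAt_tsum_of_isPreconnected hu_sum Metric.isOpen_ball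
    (convex_ball (0:ℂ) R).isPreconnected
    (g := fun m w => ((pcoef μ ν γ n m : ℝ) : ℂ) * w ^ m)
    (g' := fun m w => ((pcoef μ ν γ n m : ℝ) : ℂ) * ((m : ℂ) * w ^ (m - 1)))
    (fun m w _ => (hasDerivAt_pow m w).const_mul _)
    (fun m w hw => by
      rw [norm_mul, norm_mul, Complex.norm_real, Real.norm_eq_abs,
        abs_of_nonneg (pcoef_pos hμ0 hγ hν n m).le, Complex.norm_natCast, norm_pow]
      have hwR : ‖w‖ ≤ R := by
        rw [Metric.mem_ball, dist_zero_right] at hw; exact hw.le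
      have h1 : ‖w‖ ^ (m - 1) ≤ R ^ (m - 1) := pow_le_pow_left₀ (norm_nonneg w) hwR _
      have hp := (pcoef_pos hμ0 hγ hν n m).le
      apply mul_le_mul_of_nonneg_left _ hp
      exact mul_le_mul_of_nonneg_left h1 (Nat.cast_nonneg m))
    hzball (summable_gfun hμ0 hμ1 hγ hν n z) hzball
  have hsum' : Summable fun m => ((pcoef μ ν γ n m : ℝ) : ℂ) * ((m : ℂ) * z ^ (m - 1)) := by
    apply Summable.of_norm
    apply Summable.of_nonneg_of_le (fun m => norm_nonneg _) _ hu_sum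
    intro m
    rw [norm_mul, norm_mul, Complex.norm_real, Real.norm_eq_abs,
      abs_of_nonneg (pcoef_pos hμ0 hγ hν n m).le, Complex.norm_natCast, norm_pow]
    have h1 : ‖z‖ ^ (m - 1) ≤ R ^ (m - 1) := by
      apply pow_le_pow_left₀ (norm_nonneg z); simp [hR]
    exact mul_le_mul_of_nonneg_left
      (mul_le_mul_of_nonneg_left h1 (Nat.cast_nonneg m))
      (pcoef_pos hμ0 hγ hν n m).le
  have heq : (∑' m : ℕ, ((pcoef μ ν γ n m : ℝ) : ℂ) * ((m : ℂ) * z ^ (m - 1)))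
      = gfun μ ν γ (n + 1) z := by
    rw [Summable.tsum_eq_zero_add hsum']
    simp only [Nat.cast_zero, zero_mul, mul_zero, zero_add]
    rw [gfun]
    apply tsum_congr
    intro m
    rw [show m + 1 - 1 = m from rfl, ← pcoef_succ hμ0 hγ hν n m]
    push_cast; ring
  rw [← heq]
  exact key

lemma prabhakar_eq_gfun : prabhakar μ ν γ = gfun μ ν γ 0 := by
  funext z
  rw [prabhakar, gfun]
  apply tsum_congr
  intro m
  simp [pcoef, Nat.zero_add]

include hμ0 hμ1 hγ hν in
lemma iteratedDeriv_prabhakar (n : ℕ) (z : ℂ) :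
    iteratedDeriv n (prabhakar μ ν γ) z = gfun μ ν γ n z := by
  induction n generalizing z with
  | zero => rw [iteratedDeriv_zero, prabhakar_eq_gfun]
  | succ n ih =>
    rw [iteratedDeriv_succ]
    have h : iteratedDeriv n (prabhakar μ ν γ) = gfun μ ν γ n := funext ih
    rw [h]
    exact (hasDerivAt_gfun hμ0 hμ1 hγ hν n z).deriv

end

end PrabhakarMGF

/-- Moment generating function:
`∑_n e^{−sn} Γ(ν) (x^n/n!) (d^n/dz^n E_{μ,ν}^γ)(−x) = Γ(ν) E_{μ,ν}^γ(x(e^{−s}−1))`. -/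
theorem prabhakar_mgf (μ ν γ : ℝ) (hμ0 : 0 < μ) (hμ1 : μ ≤ 1) (hγ : 0 < γ)
    (hν : μ * γ ≤ ν) (x : ℝ) (hx : 0 ≤ x) (s : ℝ) :
    ∑' n : ℕ, ((Real.exp (-(s * n)) * (Real.Gamma ν * (x ^ n / n.factorial)) : ℝ) : ℂ)
        * iteratedDeriv n (prabhakar μ ν γ) (-(x : ℂ))
      = (Real.Gamma ν : ℂ) * prabhakar μ ν γ ((x * (Real.exp (-s) - 1) : ℝ) : ℂ) := by
  classical
  open PrabhakarMGF in
  have hν0 : 0 < ν := lt_of_lt_of_le (mul_pos hμ0 hγ) hν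
  have hΓν : 0 < Real.Gamma ν := Real.Gamma_pos_of_pos hν0
  have hΓγ : 0 < Real.Gamma γ := Real.Gamma_pos_of_pos hγ
  set A : ℕ → ℂ := fun n =>
    ((Real.exp (-(s * n)) * (Real.Gamma ν * (x ^ n / n.factorial)) : ℝ) : ℂ) with hA
  set F : ℕ × ℕ → ℂ := fun p =>
    A p.1 * (((pcoef μ ν γ p.1 p.2 : ℝ) : ℂ) * (-(x:ℂ)) ^ p.2) with hF
  set φ : ℕ × ℕ → ℝ := fun p =>
    (Real.exp (-(s * p.1)) * (Real.Gamma ν * (x ^ p.1 / p.1.factorial)))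
      * (pcoef μ ν γ p.1 p.2 * x ^ p.2) with hφ
  have hφnn : ∀ p, 0 ≤ φ p := by
    intro p
    have := (pcoef_pos hμ0 hγ hν p.1 p.2).le
    have h1 : (0:ℝ) ≤ x ^ p.1 / p.1.factorial := by positivity
    have h2 : (0:ℝ) ≤ x ^ p.2 := by positivity
    positivity
  have hnorm : ∀ p, ‖F p‖ = φ p := by
    rintro ⟨n, m⟩
    simp only [hF, hA, hφ, norm_mul, norm_pow, norm_neg, Complex.norm_real, Real.norm_eq_abs]
    have h1 : (0:ℝ) ≤ x ^ n / n.factorial := by positivity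
    rw [abs_of_nonneg hx, abs_of_nonneg (pcoef_pos hμ0 hγ hν n m).le,
      abs_of_nonneg (Real.exp_pos _).le, abs_of_nonneg hΓν.le, abs_of_nonneg h1]
  -- exponent rewriting
  have hexp : ∀ n : ℕ, Real.exp (-(s * n)) = Real.exp (-s) ^ n := by
    intro n
    rw [← Real.exp_nat_mul]
    congr 1
    ring
  -- real row sums
  have hrowR : ∀ k : ℕ, ∑ p ∈ Finset.HasAntidiagonal.antidiagonal k, φ p
      = (Real.Gamma ν * (Real.Gamma (γ + k) / (Real.Gamma γ * Real.Gamma (μ * k + ν))))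
        * ((x * Real.exp (-s) + x) ^ k / k.factorial) := by
    intro k
    apply row_sum
    rintro ⟨n, m⟩ hp
    have hk : n + m = k := Finset.HasAntidiagonal.mem_antidiagonal.mp hp
    subst hk
    simp only [hφ, pcoef, hexp n]
    rw [mul_pow x (Real.exp (-s)) n]
    ring
  -- summability of φ
  have hrw : ∀ k : ℕ, (∑' p : {p : ℕ × ℕ // p ∈ Finset.HasAntidiagonal.antidiagonal k}, φ ↑p)
      = Real.Gamma ν * (pcoef μ ν γ 0 k * (x * Real.exp (-s) + x) ^ k) := by
    intro k
    rw [Finset.tsum_subtype (Finset.HasAntidiagonal.antidiagonal k) φ, hrowR k]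
    simp only [pcoef, Nat.zero_add]
    ring
  have hφe : Summable
      (fun σ : Σ k : ℕ, {p : ℕ × ℕ // p ∈ Finset.HasAntidiagonal.antidiagonal k} => φ σ.2) := by
    apply (summable_sigma_of_nonneg (fun σ => hφnn _)).mpr
    refine ⟨fun k => Summable.of_finite, ?_⟩
    simp only [hrw]
    exact (summable_pcoef hμ0 hμ1 hγ hν 0 (by positivity)).mul_left _
  have hφsum : Summable φ :=
    (Finset.HasAntidiagonal.sigmaAntidiagonalEquivProd.summable_iff).mp
      (hφe.congr (fun σ => rfl))
  have hFsum : Summable F := by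
    apply Summable.of_norm
    simpa only [hnorm] using hφsum
  have hFe : Summable (F ∘ Finset.HasAntidiagonal.sigmaAntidiagonalEquivProd) :=
    (Finset.HasAntidiagonal.sigmaAntidiagonalEquivProd.summable_iff).mpr hFsum
  -- main calc
  calc ∑' n : ℕ, ((Real.exp (-(s * n)) * (Real.Gamma ν * (x ^ n / n.factorial)) : ℝ) : ℂ)
        * iteratedDeriv n (prabhakar μ ν γ) (-(x : ℂ))
      = ∑' n : ℕ, ∑' m : ℕ, F (n, m) := by
        apply tsum_congr
        intro n
        rw [iteratedDeriv_prabhakar hμ0 hμ1 hγ hν n, gfun, ← tsum_mul_left]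
    _ = ∑' p : ℕ × ℕ, F p := (Summable.tsum_prod' hFsum (fun n => hFsum.prod_factor n)).symm
    _ = ∑' σ : (Σ k : ℕ, Finset.HasAntidiagonal.antidiagonal k), F (Finset.HasAntidiagonal.sigmaAntidiagonalEquivProd σ) :=
        (Finset.HasAntidiagonal.sigmaAntidiagonalEquivProd.tsum_eq F).symm
    _ = ∑' k : ℕ, ∑' p : Finset.HasAntidiagonal.antidiagonal k, F p.val :=
        Summable.tsum_sigma' (fun k => Summable.of_finite) hFe
    _ = ∑' k : ℕ, (Real.Gamma ν : ℂ)
          * (((Real.Gamma (γ + k) / Real.Gamma γ / (k.factorial * Real.Gamma (μ * k + ν)) : ℝ)) : ℂ)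
          * ((x * (Real.exp (-s) - 1) : ℝ) : ℂ) ^ k := by
        apply tsum_congr
        intro k
        rw [Finset.tsum_subtype (Finset.HasAntidiagonal.antidiagonal k) F]
        rw [row_sum k F
          ((Real.Gamma ν : ℂ) * ((Real.Gamma (γ + k) / (Real.Gamma γ * Real.Gamma (μ * k + ν)) : ℝ) : ℂ))
          (((x * Real.exp (-s) : ℝ)) : ℂ) (-(x:ℂ)) ?_]
        · have hab : (((x * Real.exp (-s) : ℝ)) : ℂ) + (-(x:ℂ))
              = ((x * (Real.exp (-s) - 1) : ℝ) : ℂ) := by push_cast; ring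
          rw [hab]
          push_cast
          ring
        · rintro ⟨n, m⟩ hp
          have hk : n + m = k := Finset.HasAntidiagonal.mem_antidiagonal.mp hp
          subst hk
          simp only [hF, hA, pcoef, hexp n]
          push_cast
          ring
    _ = (Real.Gamma ν : ℂ) * prabhakar μ ν γ ((x * (Real.exp (-s) - 1) : ℝ) : ℂ) := by
        rw [prabhakar, ← tsum_mul_left]
        apply tsum_congr
        intro k
        ring
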